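/- Let A be the adjacency matrix of a finite simple graph on vertex set V and fix O ⊆ V with |O| ≥ 4. Let u = A_{OO}·1 and v = A_{O O^c}·1 (so u_j = deg_O(j) and v_j = deg_{V∖O}(j) for j ∈ O), let S = Ξ( A_{OO} + A_{OO}² − A_{OO} ⊙ ( u 1ᵀ + 1 uᵀ ) + u uᵀ ) where Ξ doubles the diagonal entries and ⊙ is the entrywise product, and let z = ( 1ᵀu + 2·1ᵀv ) u − 2 v ⊙ u + 2 ( A_{OO} v + u ). Then QᵀQ = 2^{|O|−4} S and Qᵀr = 2^{|O|−4} z; consequently every minimizer b of ‖Qb − r‖₂² over b ∈ ℝ^O satisfies S b = z. -/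

import Mathlib

open Finset Matrix

variable {V : Type*} [Fintype V] [DecidableEq V]

/-- The adjacency matrix of the graph, real-valued. -/
noncomputable def adjMat (G : SimpleGraph V) [DecidableRel G.Adj] (i j : V) : ℝ :=
  if G.Adj i j then 1 else 0

/-- `vol(I,J) = ∑_{i∈I} ∑_{j∈J} A_{ij}`. -/
noncomputable def vol (G : SimpleGraph V) [DecidableRel G.Adj] (I J : Finset V) : ℝ :=
  ∑ i ∈ I, ∑ j ∈ J, adjMat G i j

/-- `deg_S(i) = ∑_{s∈S} A_{is}`. -/
noncomputable def degS (G : SimpleGraph V) [DecidableRel G.Adj] (S : Finset V) (i : V) : ℝ :=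
  ∑ s ∈ S, adjMat G i s

/-- `vol²_S(i,j) = ∑_{r∈S} A_{ir} A_{rj}`, the number of paths of length 2 from `i` to `j`
through `S`. -/
noncomputable def vol2 (G : SimpleGraph V) [DecidableRel G.Adj] (S : Finset V) (i j : V) : ℝ :=
  ∑ r ∈ S, adjMat G i r * adjMat G r j

variable (G : SimpleGraph V) [DecidableRel G.Adj] (O : Finset V)

/-- The submatrix `A_{OO}` of the adjacency matrix. -/
noncomputable def AOO : Matrix O O ℝ := fun i j => adjMat G (i : V) (j : V)

/-- `u = A_{OO}·1`, i.e. `u_j = deg_O(j)`. -/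
noncomputable def uVec : O → ℝ := fun j => ∑ k : O, adjMat G (j : V) (k : V)

/-- `v = A_{OO^c}·1`, i.e. `v_j = deg_{V∖O}(j)`. -/
noncomputable def vVec : O → ℝ := fun j => ∑ k ∈ Oᶜ, adjMat G (j : V) k

/-- The operator `Ξ` that doubles the diagonal entries of a matrix. -/
def Xi {m : Type*} [DecidableEq m] (M : Matrix m m ℝ) : Matrix m m ℝ :=
  fun i j => if i = j then 2 * M i j else M i j

/-- `S = Ξ(A_{OO} + A_{OO}² − A_{OO} ⊙ (u1ᵀ + 1uᵀ) + uuᵀ)`. -/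
noncomputable def Smat : Matrix O O ℝ :=
  Xi (AOO G O + AOO G O ^ 2
      - Matrix.hadamard (AOO G O)
          (Matrix.vecMulVec (uVec G O) (fun _ => 1) + Matrix.vecMulVec (fun _ => 1) (uVec G O))
      + Matrix.vecMulVec (uVec G O) (uVec G O))

/-- `z = (1ᵀu + 2·1ᵀv) u − 2 v ⊙ u + 2 (A_{OO} v + u)`. -/
noncomputable def zVec : O → ℝ := fun j =>
  ((∑ k : O, uVec G O k) + 2 * ∑ k : O, vVec G O k) * uVec G O j
    - 2 * (vVec G O j * uVec G O j)
    + 2 * ((AOO G O).mulVec (vVec G O) j + uVec G O j)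

/-- The matrix `Q`, with rows indexed by proper subsets `I ⊊ O` and columns by `j ∈ O`:
`Q_{I,j} = 1{j∉I} vol(I,{j})`. -/
noncomputable def Qmat : Matrix {I : Finset V // I ⊂ O} O ℝ :=
  fun I j => (if (j : V) ∉ I.1 then (1 : ℝ) else 0) * vol G I.1 {(j : V)}

/-- The vector `r`, indexed by proper subsets `I ⊊ O`: `r_I = vol(I, V∖I)`. -/
noncomputable def rVec : {I : Finset V // I ⊂ O} → ℝ := fun I => vol G I.1 (I.1)ᶜ

set_option linter.unreachableTactic false
set_option linter.unusedTactic false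
set_option linter.unusedSectionVars false
set_option maxHeartbeats 4000000

/-- Indicator of equality, real-valued. -/
noncomputable def ind (x y : V) : ℝ := if x = y then 1 else 0

lemma adj_self (x : V) : adjMat G x x = 0 := by simp [adjMat]

lemma adj_comm' (x y : V) : adjMat G x y = adjMat G y x := by
  simp [adjMat, SimpleGraph.adj_comm]

lemma adj_sq (x y : V) : adjMat G x y * adjMat G x y = adjMat G x y := by
  unfold adjMat; split_ifs <;> norm_num

lemma prod_if_notmem (t s : Finset V) :
    (∏ i ∈ s, if i ∈ t then (0:ℝ) else 1) = if Disjoint t s then 1 else 0 := by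
  split_ifs with h
  · exact Finset.prod_eq_one fun i hi => if_neg fun hit => Finset.disjoint_left.mp h hit hi
  · rw [Finset.disjoint_left] at h
    push_neg at h
    obtain ⟨i, hit, his⟩ := h
    exact Finset.prod_eq_zero his (by simp [hit])

lemma count_eq (T P N : Finset V) (hP : P ⊆ T) :
    (∑ I ∈ T.powerset, (if P ⊆ I ∧ Disjoint N I then (1:ℝ) else 0))
      = ∏ i ∈ T, ((if i ∈ N then (0:ℝ) else 1) + (if i ∈ P then 0 else 1)) := by
  rw [Finset.prod_add]
  apply Finset.sum_congr rfl
  intro I hI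
  rw [Finset.mem_powerset] at hI
  rw [prod_if_notmem N I, prod_if_notmem P (T \ I)]
  have hd : Disjoint P (T \ I) ↔ P ⊆ I := by
    constructor
    · intro h x hx
      by_contra hxI
      exact (Finset.disjoint_left.mp h hx) (Finset.mem_sdiff.mpr ⟨hP hx, hxI⟩)
    · intro h
      exact Finset.disjoint_left.mpr fun x hx hxd => (Finset.mem_sdiff.mp hxd).2 (h hx)
  simp only [hd]
  split_ifs <;> simp_all

lemma prod_eval (T P N : Finset V) (hP : P ⊆ T) (hN : N ⊆ T) :
    (∏ i ∈ T, ((if i ∈ N then (0:ℝ) else 1) + (if i ∈ P then 0 else 1)))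
      = if Disjoint P N then (2:ℝ) ^ (T.card - (P ∪ N).card) else 0 := by
  split_ifs with h
  · have hsub : P ∪ N ⊆ T := Finset.union_subset hP hN
    rw [← Finset.prod_sdiff hsub]
    have h1 : (∏ i ∈ T \ (P ∪ N), ((if i ∈ N then (0:ℝ) else 1) + (if i ∈ P then 0 else 1)))
        = 2 ^ (T \ (P ∪ N)).card := by
      rw [Finset.prod_congr rfl fun i hi => ?_, Finset.prod_const]
      rw [Finset.mem_sdiff, Finset.mem_union] at hi
      push_neg at hi
      simp [hi.2.1, hi.2.2]
      norm_num
    have h2 : (∏ i ∈ P ∪ N, ((if i ∈ N then (0:ℝ) else 1) + (if i ∈ P then 0 else 1))) = 1 := by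
      apply Finset.prod_eq_one
      intro i hi
      rcases Finset.mem_union.mp hi with hiP | hiN
      · simp [hiP, Finset.disjoint_left.mp h hiP]
      · have hnp : i ∉ P := fun hiP' => Finset.disjoint_left.mp h hiP' hiN
        simp [hiN, hnp]
    rw [h1, h2, mul_one, Finset.card_sdiff_of_subset hsub]
  · rw [Finset.disjoint_left] at h
    push_neg at h
    obtain ⟨i, hiP, hiN⟩ := h
    exact Finset.prod_eq_zero (hP hiP) (by simp [hiP, hiN])

lemma pow_split {n u : ℕ} (hn : 4 ≤ n) (hu : u ≤ 4) :
    (2:ℝ) ^ (n - u) = 2 ^ ((n:ℤ) - 4) * 2 ^ (4 - u) := by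
  have h : ((n - u : ℕ) : ℤ) = ((n:ℤ) - 4) + ((4 - u : ℕ) : ℤ) := by
    push_cast [Nat.cast_sub (hu.trans hn), Nat.cast_sub hu]; ring
  calc (2:ℝ)^(n-u) = (2:ℝ)^(((n-u:ℕ)):ℤ) := (zpow_natCast 2 _).symm
  _ = 2^((n:ℤ)-4) * 2^(((4-u:ℕ)):ℤ) := by rw [h, zpow_add₀ (by norm_num : (2:ℝ) ≠ 0)]
  _ = _ := by rw [zpow_natCast]

lemma cval {T : Finset V} (hn : 4 ≤ T.card) {a b j k : V}
    (ha : a ∈ T) (hb : b ∈ T) (hj : j ∈ T) (hk : k ∈ T) :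
    (∑ I ∈ T.powerset, ((if a ∈ I then (1:ℝ) else 0) * (if b ∈ I then 1 else 0)
        * (if j ∉ I then 1 else 0) * (if k ∉ I then 1 else 0)))
      = 2 ^ ((T.card:ℤ) - 4) *
        ((1 + ind j k) * (1 + ind a b) * (1 - ind a j) * (1 - ind a k)
          * (1 - ind b j) * (1 - ind b k)) := by
  have hstep : ∀ I ∈ T.powerset,
      ((if a ∈ I then (1:ℝ) else 0) * (if b ∈ I then 1 else 0)
        * (if j ∉ I then 1 else 0) * (if k ∉ I then 1 else 0))
      = (if ({a,b} : Finset V) ⊆ I ∧ Disjoint ({j,k} : Finset V) I then (1:ℝ) else 0) := by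
    intro I _
    have hiff : (({a,b} : Finset V) ⊆ I ∧ Disjoint ({j,k} : Finset V) I)
        ↔ (a ∈ I ∧ b ∈ I ∧ j ∉ I ∧ k ∉ I) := by
      simp [Finset.insert_subset_iff, Finset.disjoint_left]
      tauto
    simp only [hiff]
    split_ifs <;> simp_all
  rw [Finset.sum_congr rfl hstep,
    count_eq T {a,b} {j,k} (by simp [Finset.insert_subset_iff, ha, hb]),
    prod_eval T {a,b} {j,k} (by simp [Finset.insert_subset_iff, ha, hb])
      (by simp [Finset.insert_subset_iff, hj, hk])]
  by_cases h1 : a = b <;> by_cases h2 : j = k <;> by_cases h3 : a = j <;>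
    by_cases h4 : a = k <;> by_cases h5 : b = j <;> by_cases h6 : b = k <;>
    subst_vars <;>
    simp_all [ind, Finset.disjoint_left, Finset.union_comm, Finset.insert_union,
      Finset.union_insert, Finset.card_insert_of_notMem,
      Finset.mem_insert, Finset.mem_singleton, ne_comm] <;>
    rw [pow_split hn (by norm_num)] <;> norm_num
lemma mainQQ {T : Finset V} {j k : V} (hj : j ∈ T) (hk : k ∈ T) :
    (∑ a ∈ T, ∑ b ∈ T, (adjMat G a j * adjMat G b k) *
        ((1 + ind j k) * (1 + ind a b) * (1 - ind a j) * (1 - ind a k)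
          * (1 - ind b j) * (1 - ind b k)))
    = (1 + ind j k) *
        (adjMat G j k + (∑ r ∈ T, adjMat G j r * adjMat G r k)
          - adjMat G j k * ((∑ a ∈ T, adjMat G j a) + (∑ a ∈ T, adjMat G k a))
          + (∑ a ∈ T, adjMat G j a) * (∑ a ∈ T, adjMat G k a)) := by
  have expand : ∀ a ∈ T, ∀ b ∈ T, (adjMat G a j * adjMat G b k) *
        ((1 + ind j k) * (1 + ind a b) * (1 - ind a j) * (1 - ind a k)
          * (1 - ind b j) * (1 - ind b k))
      = (1 + ind j k) * ((adjMat G a j * adjMat G b k)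
          + (adjMat G a j * adjMat G b k) * ind a b
          - ((adjMat G a j) * (adjMat G b k * ind b j))
          - ((adjMat G a j * ind a k) * (adjMat G b k))
          + ((adjMat G a j * ind a k) * (adjMat G b k * ind b j))) := by
    intro a _ b _
    unfold ind
    split_ifs <;> subst_vars <;> simp_all [adj_self] <;> ring
  rw [Finset.sum_congr rfl fun a ha => Finset.sum_congr rfl fun b hb => expand a ha b hb]
  simp only [← Finset.mul_sum]
  congr 1
  have collapse1 : ∀ a ∈ T, ∑ b ∈ T, (adjMat G a j * adjMat G b k) * ind a b
      = adjMat G a j * adjMat G a k := by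
    intro a ha
    simp [ind, mul_ite, Finset.sum_ite_eq, ha]
  have h1 : ∑ a ∈ T, ∑ b ∈ T, (adjMat G a j * adjMat G b k) * ind a b
      = ∑ a ∈ T, adjMat G a j * adjMat G a k :=
    Finset.sum_congr rfl collapse1
  have hcj : ∀ x ∈ T, (∑ b ∈ T, adjMat G b x * ind b x) = 0 ∨ True := fun _ _ => Or.inr trivial
  have h3 : (∑ b ∈ T, adjMat G b k * ind b j) = adjMat G j k := by
    have : (∑ b ∈ T, adjMat G b k * ind b j) = ∑ b ∈ T, if b = j then adjMat G b k else 0 := by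
      apply Finset.sum_congr rfl; intro b _; simp [ind, mul_ite]
    rw [this, Finset.sum_ite_eq' T j (fun b => adjMat G b k), if_pos hj, adj_comm']
  have h4 : (∑ a ∈ T, adjMat G a j * ind a k) = adjMat G j k := by
    have : (∑ a ∈ T, adjMat G a j * ind a k) = ∑ a ∈ T, if a = k then adjMat G a j else 0 := by
      apply Finset.sum_congr rfl; intro a _; simp [ind, mul_ite]
    rw [this, Finset.sum_ite_eq' T k (fun a => adjMat G a j), if_pos hk, adj_comm']
  simp only [Finset.sum_add_distrib, Finset.sum_sub_distrib]
  rw [h1]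
  rw [show (∑ a ∈ T, ∑ b ∈ T, adjMat G a j * (adjMat G b k * ind b j))
      = (∑ a ∈ T, adjMat G a j) * (∑ b ∈ T, adjMat G b k * ind b j) from
    (Finset.sum_mul_sum T T _ _).symm]
  rw [show (∑ a ∈ T, ∑ b ∈ T, (adjMat G a j * ind a k) * adjMat G b k)
      = (∑ a ∈ T, adjMat G a j * ind a k) * (∑ b ∈ T, adjMat G b k) from
    (Finset.sum_mul_sum T T _ _).symm]
  rw [show (∑ a ∈ T, ∑ b ∈ T, (adjMat G a j * ind a k) * (adjMat G b k * ind b j))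
      = (∑ a ∈ T, adjMat G a j * ind a k) * (∑ b ∈ T, adjMat G b k * ind b j) from
    (Finset.sum_mul_sum T T _ _).symm]
  rw [show (∑ a ∈ T, ∑ b ∈ T, adjMat G a j * adjMat G b k)
      = (∑ a ∈ T, adjMat G a j) * (∑ b ∈ T, adjMat G b k) from
    (Finset.sum_mul_sum T T _ _).symm]
  rw [h3, h4]
  have hrow : ∀ x : V, (∑ a ∈ T, adjMat G a x) = ∑ a ∈ T, adjMat G x a :=
    fun x => Finset.sum_congr rfl fun a _ => adj_comm' G a x
  have h2 : (∑ a ∈ T, adjMat G a j * adjMat G a k) = ∑ r ∈ T, adjMat G j r * adjMat G r k :=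
    Finset.sum_congr rfl fun a _ => by rw [adj_comm' G a j]
  rw [hrow j, hrow k, h2, adj_sq]
  ring

lemma mainA {T : Finset V} {j : V} (hj : j ∈ T) :
    (∑ a ∈ T, ∑ i ∈ T, ∑ m ∈ T, (adjMat G a j * adjMat G i m) *
        ((1 + ind j m) * (1 + ind a i) * (1 - ind a j) * (1 - ind a m)
          * (1 - ind i j) * (1 - ind i m)))
    = (∑ a ∈ T, adjMat G j a) * (∑ i ∈ T, ∑ m ∈ T, adjMat G i m)
        + 2 * (∑ a ∈ T, adjMat G j a) := by
  have expand : ∀ a ∈ T, ∀ i ∈ T, ∀ m ∈ T, (adjMat G a j * adjMat G i m) *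
        ((1 + ind j m) * (1 + ind a i) * (1 - ind a j) * (1 - ind a m)
          * (1 - ind i j) * (1 - ind i m))
      = adjMat G a j * adjMat G i m
        + adjMat G a j * (adjMat G i m * ind j m)
        + (adjMat G a j * adjMat G i m) * ind a i
        - adjMat G a j * (adjMat G i m * ind a m)
        - (adjMat G a j * adjMat G i m) * ind i j
        + ((adjMat G a j * (adjMat G i m * ind j m)) * ind a i)
        + ((adjMat G a j * (adjMat G i m * ind a m)) * ind i j) := by
    intro a _ i _ m _
    unfold ind
    split_ifs <;> subst_vars <;> simp_all [adj_self] <;> ring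
  rw [Finset.sum_congr rfl fun a ha => Finset.sum_congr rfl fun i hi =>
    Finset.sum_congr rfl fun m hm => expand a ha i hi m hm]
  simp only [Finset.sum_add_distrib, Finset.sum_sub_distrib]
  -- T0
  have T0 : ∑ a ∈ T, ∑ i ∈ T, ∑ m ∈ T, adjMat G a j * adjMat G i m
      = (∑ a ∈ T, adjMat G a j) * (∑ i ∈ T, ∑ m ∈ T, adjMat G i m) := by
    rw [Finset.sum_mul_sum]
    exact Finset.sum_congr rfl fun a _ =>
      Finset.sum_congr rfl fun i _ => (Finset.mul_sum _ _ _).symm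
  -- T1 : collapse m = j
  have T1 : ∑ a ∈ T, ∑ i ∈ T, ∑ m ∈ T, adjMat G a j * (adjMat G i m * ind j m)
      = (∑ a ∈ T, adjMat G a j) * (∑ i ∈ T, adjMat G i j) := by
    rw [Finset.sum_mul_sum]
    refine Finset.sum_congr rfl fun a _ => Finset.sum_congr rfl fun i _ => ?_
    simp [ind, mul_ite, Finset.sum_ite_eq, hj]
  -- T2 : collapse i = a
  have T2 : ∑ a ∈ T, ∑ i ∈ T, ∑ m ∈ T, (adjMat G a j * adjMat G i m) * ind a i
      = ∑ a ∈ T, adjMat G a j * (∑ m ∈ T, adjMat G a m) := by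
    refine Finset.sum_congr rfl fun a ha => ?_
    have : ∀ i ∈ T, (∑ m ∈ T, (adjMat G a j * adjMat G i m) * ind a i)
        = (adjMat G a j * (∑ m ∈ T, adjMat G i m)) * ind a i := by
      intro i _; rw [Finset.mul_sum, Finset.sum_mul]
    rw [Finset.sum_congr rfl this]
    simp [ind, mul_ite, Finset.sum_ite_eq, ha]
  -- T3 : collapse m = a
  have T3 : ∑ a ∈ T, ∑ i ∈ T, ∑ m ∈ T, adjMat G a j * (adjMat G i m * ind a m)
      = ∑ a ∈ T, adjMat G a j * (∑ i ∈ T, adjMat G i a) := by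
    refine Finset.sum_congr rfl fun a ha => ?_
    rw [Finset.mul_sum]
    refine Finset.sum_congr rfl fun i _ => ?_
    simp [ind, mul_ite, Finset.sum_ite_eq, ha, Finset.mul_sum]
  -- T4 : collapse i = j
  have T4 : ∑ a ∈ T, ∑ i ∈ T, ∑ m ∈ T, (adjMat G a j * adjMat G i m) * ind i j
      = ∑ a ∈ T, adjMat G a j * (∑ m ∈ T, adjMat G j m) := by
    refine Finset.sum_congr rfl fun a ha => ?_
    have : ∀ i ∈ T, (∑ m ∈ T, (adjMat G a j * adjMat G i m) * ind i j)
        = (adjMat G a j * (∑ m ∈ T, adjMat G i m)) * ind i j := by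
      intro i _; rw [Finset.mul_sum, Finset.sum_mul]
    rw [Finset.sum_congr rfl this]
    have : (∑ i ∈ T, (adjMat G a j * (∑ m ∈ T, adjMat G i m)) * ind i j)
        = ∑ i ∈ T, if i = j then adjMat G a j * (∑ m ∈ T, adjMat G i m) else 0 := by
      refine Finset.sum_congr rfl fun i _ => by simp [ind, mul_ite]
    rw [this, Finset.sum_ite_eq' T j _, if_pos hj]
  -- T5 : collapse m = j then i = a
  have T5 : ∑ a ∈ T, ∑ i ∈ T, ∑ m ∈ T, (adjMat G a j * (adjMat G i m * ind j m)) * ind a i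
      = ∑ a ∈ T, adjMat G a j := by
    refine Finset.sum_congr rfl fun a ha => ?_
    have step1 : ∀ i ∈ T, (∑ m ∈ T, (adjMat G a j * (adjMat G i m * ind j m)) * ind a i)
        = (adjMat G a j * adjMat G i j) * ind a i := by
      intro i _
      have : (∑ m ∈ T, (adjMat G a j * (adjMat G i m * ind j m)) * ind a i)
          = ∑ m ∈ T, (if j = m then (adjMat G a j * adjMat G i m) * ind a i else 0) := by
        refine Finset.sum_congr rfl fun m _ => by unfold ind; split_ifs <;> ring
      rw [this, Finset.sum_ite_eq T j _, if_pos hj]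
    rw [Finset.sum_congr rfl step1]
    have : (∑ i ∈ T, (adjMat G a j * adjMat G i j) * ind a i)
        = ∑ i ∈ T, if a = i then adjMat G a j * adjMat G i j else 0 := by
      refine Finset.sum_congr rfl fun i _ => by simp [ind, mul_ite]
    rw [this, Finset.sum_ite_eq T a _, if_pos ha, adj_sq]
  -- T6 : collapse m = a then i = j
  have T6 : ∑ a ∈ T, ∑ i ∈ T, ∑ m ∈ T, (adjMat G a j * (adjMat G i m * ind a m)) * ind i j
      = ∑ a ∈ T, adjMat G a j := by
    refine Finset.sum_congr rfl fun a ha => ?_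
    have step1 : ∀ i ∈ T, (∑ m ∈ T, (adjMat G a j * (adjMat G i m * ind a m)) * ind i j)
        = (adjMat G a j * adjMat G i a) * ind i j := by
      intro i _
      have : (∑ m ∈ T, (adjMat G a j * (adjMat G i m * ind a m)) * ind i j)
          = ∑ m ∈ T, (if a = m then (adjMat G a j * adjMat G i m) * ind i j else 0) := by
        refine Finset.sum_congr rfl fun m _ => by unfold ind; split_ifs <;> ring
      rw [this, Finset.sum_ite_eq T a _, if_pos ha]
    rw [Finset.sum_congr rfl step1]
    have : (∑ i ∈ T, (adjMat G a j * adjMat G i a) * ind i j)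
        = ∑ i ∈ T, if i = j then adjMat G a j * adjMat G i a else 0 := by
      refine Finset.sum_congr rfl fun i _ => by simp [ind, mul_ite]
    rw [this, Finset.sum_ite_eq' T j _, if_pos hj, ← adj_comm', adj_sq]
  rw [T0, T1, T2, T3, T4, T5, T6]
  have T4' : (∑ a ∈ T, adjMat G a j * ∑ m ∈ T, adjMat G j m)
      = (∑ a ∈ T, adjMat G a j) * (∑ m ∈ T, adjMat G j m) := (Finset.sum_mul _ _ _).symm
  rw [T4']
  have hrow : ∀ x : V, (∑ a ∈ T, adjMat G a x) = ∑ a ∈ T, adjMat G x a :=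
    fun x => Finset.sum_congr rfl fun a _ => adj_comm' G a x
  have h23 : (∑ a ∈ T, adjMat G a j * (∑ m ∈ T, adjMat G a m))
      = ∑ a ∈ T, adjMat G a j * (∑ i ∈ T, adjMat G i a) :=
    Finset.sum_congr rfl fun a _ => by rw [hrow a]
  rw [h23, hrow j]
  ring


lemma mainB {T : Finset V} {j : V} (hj : j ∈ T) (w : V → ℝ) :
    (∑ a ∈ T, ∑ i ∈ T, (adjMat G a j * w i) *
        ((1 + ind j j) * (1 + ind a i) * (1 - ind a j) * (1 - ind a j)
          * (1 - ind i j) * (1 - ind i j)))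
    = 2 * ((∑ a ∈ T, adjMat G j a) * (∑ i ∈ T, w i)
        - (∑ a ∈ T, adjMat G j a) * w j + (∑ a ∈ T, adjMat G j a * w a)) := by
  have expand : ∀ a ∈ T, ∀ i ∈ T, (adjMat G a j * w i) *
        ((1 + ind j j) * (1 + ind a i) * (1 - ind a j) * (1 - ind a j)
          * (1 - ind i j) * (1 - ind i j))
      = 2 * (adjMat G a j * w i) + 2 * ((adjMat G a j * w i) * ind a i)
        - 2 * ((adjMat G a j * w i) * ind i j) := by
    intro a _ i _
    unfold ind
    split_ifs <;> subst_vars <;> simp_all [adj_self] <;> ring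
  rw [Finset.sum_congr rfl fun a ha => Finset.sum_congr rfl fun i hi => expand a ha i hi]
  simp only [Finset.sum_add_distrib, Finset.sum_sub_distrib]
  have B0 : ∑ a ∈ T, ∑ i ∈ T, 2 * (adjMat G a j * w i)
      = 2 * ((∑ a ∈ T, adjMat G a j) * (∑ i ∈ T, w i)) := by
    rw [Finset.sum_mul_sum, Finset.mul_sum]
    exact Finset.sum_congr rfl fun a _ => by rw [Finset.mul_sum]
  have B1 : ∑ a ∈ T, ∑ i ∈ T, 2 * ((adjMat G a j * w i) * ind a i)
      = 2 * (∑ a ∈ T, adjMat G a j * w a) := by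
    rw [Finset.mul_sum]
    refine Finset.sum_congr rfl fun a ha => ?_
    have : (∑ i ∈ T, 2 * ((adjMat G a j * w i) * ind a i))
        = ∑ i ∈ T, if a = i then 2 * (adjMat G a j * w i) else 0 := by
      refine Finset.sum_congr rfl fun i _ => by simp [ind, mul_ite]
    rw [this, Finset.sum_ite_eq T a _, if_pos ha]
  have B2 : ∑ a ∈ T, ∑ i ∈ T, 2 * ((adjMat G a j * w i) * ind i j)
      = 2 * ((∑ a ∈ T, adjMat G a j) * w j) := by
    have : ∀ a ∈ T, (∑ i ∈ T, 2 * ((adjMat G a j * w i) * ind i j))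
        = 2 * (adjMat G a j * w j) := by
      intro a _
      have : (∑ i ∈ T, 2 * ((adjMat G a j * w i) * ind i j))
          = ∑ i ∈ T, if i = j then 2 * (adjMat G a j * w i) else 0 := by
        refine Finset.sum_congr rfl fun i _ => by simp [ind, mul_ite]
      rw [this, Finset.sum_ite_eq' T j _, if_pos hj]
    rw [Finset.sum_congr rfl this, ← Finset.mul_sum, ← Finset.sum_mul]
  rw [B0, B1, B2]
  have hrow : (∑ a ∈ T, adjMat G a j) = ∑ a ∈ T, adjMat G j a :=
    Finset.sum_congr rfl fun a _ => adj_comm' G a j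
  have h1 : (∑ a ∈ T, adjMat G a j * w a) = ∑ a ∈ T, adjMat G j a * w a :=
    Finset.sum_congr rfl fun a _ => by rw [adj_comm']
  rw [hrow, h1]
  ring

lemma sum_proper {T : Finset V} (f : Finset V → ℝ) (h0 : f T = 0) :
    ∑ I : {I : Finset V // I ⊂ T}, f I.1 = ∑ I ∈ T.powerset, f I := by
  rw [← Finset.sum_subtype T.ssubsets (fun I => Finset.mem_ssubsets) f]
  apply Finset.sum_subset
  · intro I hI
    exact Finset.mem_powerset.mpr (Finset.mem_ssubsets.mp hI).subset
  · intro I hI hI2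
    have hIO : I = T := by
      by_contra hne
      exact hI2 (Finset.mem_ssubsets.mpr
        (Finset.ssubset_iff_subset_ne.mpr ⟨Finset.mem_powerset.mp hI, hne⟩))
    rwa [hIO]

lemma uVec_eq (x : O) : uVec G O x = ∑ a ∈ O, adjMat G (x : V) a :=
  Finset.sum_coe_sort O (fun a => adjMat G (x : V) a)

lemma Smat_apply (j k : O) : Smat G O j k
    = (1 + ind (j : V) (k : V)) *
        (adjMat G (j : V) (k : V) + (∑ r ∈ O, adjMat G (j : V) r * adjMat G r (k : V))
          - adjMat G (j : V) (k : V) * ((∑ a ∈ O, adjMat G (j : V) a) + (∑ a ∈ O, adjMat G (k : V) a))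
          + (∑ a ∈ O, adjMat G (j : V) a) * (∑ a ∈ O, adjMat G (k : V) a)) := by
  have hsq : (AOO G O ^ 2) j k = ∑ r ∈ O, adjMat G (j : V) r * adjMat G r (k : V) := by
    rw [sq, Matrix.mul_apply]
    exact Finset.sum_coe_sort O (fun r => adjMat G (j : V) r * adjMat G r (k : V))
  unfold Smat Xi
  simp only [Matrix.add_apply, Matrix.sub_apply, Matrix.hadamard_apply,
    Matrix.vecMulVec_apply, hsq, uVec_eq, AOO]
  have hjk : (j = k) ↔ ((j : V) = (k : V)) := ⟨congrArg _, Subtype.ext⟩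
  unfold ind
  by_cases h : j = k
  · rw [if_pos h, if_pos (hjk.mp h)]
    ring
  · rw [if_neg h, if_neg (fun hc => h (hjk.mpr hc))]
    ring

lemma QtQ_entry (hO : 4 ≤ O.card) (j k : O) :
    ((Qmat G O)ᵀ * Qmat G O) j k = (2:ℝ) ^ ((O.card : ℤ) - 4) * Smat G O j k := by
  have hj := j.2
  have hk := k.2
  rw [Matrix.mul_apply]
  simp only [Matrix.transpose_apply, Qmat]
  rw [sum_proper (fun I => ((if (j:V) ∉ I then (1:ℝ) else 0) * vol G I {(j:V)}) *
      ((if (k:V) ∉ I then (1:ℝ) else 0) * vol G I {(k:V)})) (by simp [hj])]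
  have hform : ∀ I ∈ O.powerset, ((if (j:V) ∉ I then (1:ℝ) else 0) * vol G I {(j:V)}) *
      ((if (k:V) ∉ I then (1:ℝ) else 0) * vol G I {(k:V)})
      = ∑ a ∈ O, ∑ b ∈ O, (adjMat G a (j:V) * adjMat G b (k:V)) *
          ((if a ∈ I then (1:ℝ) else 0) * (if b ∈ I then 1 else 0)
            * (if (j:V) ∉ I then 1 else 0) * (if (k:V) ∉ I then 1 else 0)) := by
    intro I hI
    rw [Finset.mem_powerset] at hI
    have hv : ∀ x : V, vol G I {x} = ∑ a ∈ O, (if a ∈ I then adjMat G a x else 0) := by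
      intro x
      rw [Finset.sum_ite_mem, Finset.inter_eq_right.mpr hI]
      simp [vol]
    rw [hv, hv]
    calc ((if (j:V) ∉ I then (1:ℝ) else 0) * ∑ a ∈ O, (if a ∈ I then adjMat G a (j:V) else 0)) *
        ((if (k:V) ∉ I then (1:ℝ) else 0) * ∑ b ∈ O, (if b ∈ I then adjMat G b (k:V) else 0))
        = ((∑ a ∈ O, (if a ∈ I then adjMat G a (j:V) else 0)) *
            ∑ b ∈ O, (if b ∈ I then adjMat G b (k:V) else 0)) *
          ((if (j:V) ∉ I then (1:ℝ) else 0) * (if (k:V) ∉ I then 1 else 0)) := by ring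
      _ = ∑ a ∈ O, ∑ b ∈ O, ((if a ∈ I then adjMat G a (j:V) else 0) *
            (if b ∈ I then adjMat G b (k:V) else 0)) *
          ((if (j:V) ∉ I then (1:ℝ) else 0) * (if (k:V) ∉ I then 1 else 0)) := by
          rw [Finset.sum_mul_sum, Finset.sum_mul]
          exact Finset.sum_congr rfl fun a _ => by rw [Finset.sum_mul]
      _ = _ := by
          refine Finset.sum_congr rfl fun a _ => Finset.sum_congr rfl fun b _ => ?_
          split_ifs <;> ring
  rw [Finset.sum_congr rfl hform, Finset.sum_comm]
  rw [Finset.sum_congr rfl fun a (_ : a ∈ O) => Finset.sum_comm]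
  have hinner : ∀ a ∈ O, ∀ b ∈ O,
      (∑ I ∈ O.powerset, (adjMat G a (j:V) * adjMat G b (k:V)) *
          ((if a ∈ I then (1:ℝ) else 0) * (if b ∈ I then 1 else 0)
            * (if (j:V) ∉ I then 1 else 0) * (if (k:V) ∉ I then 1 else 0)))
      = (2:ℝ) ^ ((O.card:ℤ) - 4) * ((adjMat G a (j:V) * adjMat G b (k:V)) *
          ((1 + ind (j:V) (k:V)) * (1 + ind a b) * (1 - ind a (j:V)) * (1 - ind a (k:V))
            * (1 - ind b (j:V)) * (1 - ind b (k:V)))) := by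
    intro a ha b hb
    rw [← Finset.mul_sum, cval hO ha hb hj hk]
    ring
  rw [Finset.sum_congr rfl fun a ha => Finset.sum_congr rfl fun b hb => hinner a ha b hb]
  simp only [← Finset.mul_sum]
  rw [mainQQ G hj hk, Smat_apply]

lemma Qtr_entry (hO : 4 ≤ O.card) (j : O) :
    (Qmat G O)ᵀ.mulVec (rVec G O) j = (2:ℝ) ^ ((O.card : ℤ) - 4) * zVec G O j := by
  classical
  have hj := j.2
  have hmv : (Qmat G O)ᵀ.mulVec (rVec G O) j
      = ∑ I : {I : Finset V // I ⊂ O},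
          ((if (j:V) ∉ I.1 then (1:ℝ) else 0) * vol G I.1 {(j:V)}) * vol G I.1 (I.1)ᶜ := by
    simp [Matrix.mulVec, dotProduct, Matrix.transpose_apply, Qmat, rVec]
  rw [hmv]
  rw [sum_proper (fun I => ((if (j:V) ∉ I then (1:ℝ) else 0) * vol G I {(j:V)}) * vol G I Iᶜ)
    (by simp [hj])]
  have hform : ∀ I ∈ O.powerset,
      ((if (j:V) ∉ I then (1:ℝ) else 0) * vol G I {(j:V)}) * vol G I Iᶜ
      = (∑ a ∈ O, ∑ i ∈ O, ∑ m ∈ O, (adjMat G a (j:V) * adjMat G i m) *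
            ((if a ∈ I then (1:ℝ) else 0) * (if i ∈ I then 1 else 0)
              * (if (j:V) ∉ I then 1 else 0) * (if m ∉ I then 1 else 0)))
        + (∑ a ∈ O, ∑ i ∈ O, (adjMat G a (j:V) * (∑ m ∈ Oᶜ, adjMat G i m)) *
            ((if a ∈ I then (1:ℝ) else 0) * (if i ∈ I then 1 else 0)
              * (if (j:V) ∉ I then 1 else 0) * (if (j:V) ∉ I then 1 else 0))) := by
    intro I hI
    rw [Finset.mem_powerset] at hI
    have hv : vol G I {(j:V)} = ∑ a ∈ O, (if a ∈ I then adjMat G a (j:V) else 0) := by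
      rw [Finset.sum_ite_mem, Finset.inter_eq_right.mpr hI]
      simp [vol]
    have hcompl : ∀ i : V, (∑ m ∈ Iᶜ, adjMat G i m)
        = (∑ m ∈ O, (if m ∉ I then adjMat G i m else 0)) + ∑ m ∈ Oᶜ, adjMat G i m := by
      intro i
      have hsplit : Iᶜ = (O \ I) ∪ Oᶜ := by
        ext m
        simp only [Finset.mem_compl, Finset.mem_union, Finset.mem_sdiff]
        constructor
        · intro hm
          by_cases hmO : m ∈ O
          · exact Or.inl ⟨hmO, hm⟩
          · exact Or.inr hmO
        · rintro (⟨_, hm⟩ | hm)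
          · exact hm
          · exact fun hmI => hm (hI hmI)
      rw [hsplit, Finset.sum_union
        (Finset.disjoint_left.mpr fun x hx hxc => (Finset.mem_compl.mp hxc) (Finset.mem_sdiff.mp hx).1)]
      congr 1
      rw [show (∑ m ∈ O, (if m ∉ I then adjMat G i m else 0))
          = ∑ m ∈ O, (if m ∈ Iᶜ then adjMat G i m else 0) from
        Finset.sum_congr rfl fun m _ => by simp [Finset.mem_compl], Finset.sum_ite_mem]
      exact Finset.sum_congr
        (by ext m; simp only [Finset.mem_sdiff, Finset.mem_inter, Finset.mem_compl] <;> tauto)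
        (fun _ _ => rfl)
    have hrI : vol G I Iᶜ = ∑ i ∈ O, (if i ∈ I then
        ((∑ m ∈ O, (if m ∉ I then adjMat G i m else 0)) + ∑ m ∈ Oᶜ, adjMat G i m) else 0) := by
      rw [Finset.sum_ite_mem, Finset.inter_eq_right.mpr hI]
      unfold vol
      exact Finset.sum_congr rfl fun i _ => hcompl i
    rw [hv, hrI]
    calc ((if (j:V) ∉ I then (1:ℝ) else 0) * ∑ a ∈ O, (if a ∈ I then adjMat G a (j:V) else 0)) *
        (∑ i ∈ O, (if i ∈ I then
          ((∑ m ∈ O, (if m ∉ I then adjMat G i m else 0)) + ∑ m ∈ Oᶜ, adjMat G i m) else 0))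
        = ((∑ a ∈ O, (if a ∈ I then adjMat G a (j:V) else 0)) *
            ∑ i ∈ O, (if i ∈ I then
              ((∑ m ∈ O, (if m ∉ I then adjMat G i m else 0)) + ∑ m ∈ Oᶜ, adjMat G i m) else 0)) *
          (if (j:V) ∉ I then (1:ℝ) else 0) := by ring
      _ = ∑ a ∈ O, ∑ i ∈ O, ((if a ∈ I then adjMat G a (j:V) else 0) *
            (if i ∈ I then
              ((∑ m ∈ O, (if m ∉ I then adjMat G i m else 0)) + ∑ m ∈ Oᶜ, adjMat G i m) else 0)) *
          (if (j:V) ∉ I then (1:ℝ) else 0) := by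
          rw [Finset.sum_mul_sum, Finset.sum_mul]
          exact Finset.sum_congr rfl fun a _ => by rw [Finset.sum_mul]
      _ = _ := by
          rw [← Finset.sum_add_distrib]
          refine Finset.sum_congr rfl fun a _ => ?_
          rw [← Finset.sum_add_distrib]
          refine Finset.sum_congr rfl fun i _ => ?_
          split_ifs with h1 h2 h3 <;>
            simp [Finset.mul_sum, mul_ite, ite_mul, mul_zero, zero_mul, mul_add,
              mul_one, one_mul, Finset.sum_const_zero] <;> ring_nf <;>
            simp [Finset.sum_congr rfl]
  rw [Finset.sum_congr rfl hform, Finset.sum_add_distrib]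
  -- first grand sum: move I innermost
  rw [show (∑ I ∈ O.powerset, ∑ a ∈ O, ∑ i ∈ O, ∑ m ∈ O, (adjMat G a (j:V) * adjMat G i m) *
        ((if a ∈ I then (1:ℝ) else 0) * (if i ∈ I then 1 else 0)
          * (if (j:V) ∉ I then 1 else 0) * (if m ∉ I then 1 else 0)))
      = ∑ a ∈ O, ∑ i ∈ O, ∑ m ∈ O, ∑ I ∈ O.powerset, (adjMat G a (j:V) * adjMat G i m) *
        ((if a ∈ I then (1:ℝ) else 0) * (if i ∈ I then 1 else 0)
          * (if (j:V) ∉ I then 1 else 0) * (if m ∉ I then 1 else 0)) from by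
    rw [Finset.sum_comm]
    exact Finset.sum_congr rfl fun a _ => by
      rw [Finset.sum_comm]
      exact Finset.sum_congr rfl fun i _ => Finset.sum_comm]
  rw [show (∑ I ∈ O.powerset, ∑ a ∈ O, ∑ i ∈ O, (adjMat G a (j:V) * (∑ m ∈ Oᶜ, adjMat G i m)) *
        ((if a ∈ I then (1:ℝ) else 0) * (if i ∈ I then 1 else 0)
          * (if (j:V) ∉ I then 1 else 0) * (if (j:V) ∉ I then 1 else 0)))
      = ∑ a ∈ O, ∑ i ∈ O, ∑ I ∈ O.powerset, (adjMat G a (j:V) * (∑ m ∈ Oᶜ, adjMat G i m)) *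
        ((if a ∈ I then (1:ℝ) else 0) * (if i ∈ I then 1 else 0)
          * (if (j:V) ∉ I then 1 else 0) * (if (j:V) ∉ I then 1 else 0)) from by
    rw [Finset.sum_comm]
    exact Finset.sum_congr rfl fun a _ => Finset.sum_comm]
  have hinner1 : ∀ a ∈ O, ∀ i ∈ O, ∀ m ∈ O,
      (∑ I ∈ O.powerset, (adjMat G a (j:V) * adjMat G i m) *
        ((if a ∈ I then (1:ℝ) else 0) * (if i ∈ I then 1 else 0)
          * (if (j:V) ∉ I then 1 else 0) * (if m ∉ I then 1 else 0)))
      = (2:ℝ) ^ ((O.card:ℤ) - 4) * ((adjMat G a (j:V) * adjMat G i m) *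
          ((1 + ind (j:V) m) * (1 + ind a i) * (1 - ind a (j:V)) * (1 - ind a m)
            * (1 - ind i (j:V)) * (1 - ind i m))) := by
    intro a ha i hi m hm
    rw [← Finset.mul_sum, cval hO ha hi hj hm]
    ring
  have hinner2 : ∀ a ∈ O, ∀ i ∈ O,
      (∑ I ∈ O.powerset, (adjMat G a (j:V) * (∑ m ∈ Oᶜ, adjMat G i m)) *
        ((if a ∈ I then (1:ℝ) else 0) * (if i ∈ I then 1 else 0)
          * (if (j:V) ∉ I then 1 else 0) * (if (j:V) ∉ I then 1 else 0)))
      = (2:ℝ) ^ ((O.card:ℤ) - 4) * ((adjMat G a (j:V) * (∑ m ∈ Oᶜ, adjMat G i m)) *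
          ((1 + ind (j:V) (j:V)) * (1 + ind a i) * (1 - ind a (j:V)) * (1 - ind a (j:V))
            * (1 - ind i (j:V)) * (1 - ind i (j:V)))) := by
    intro a ha i hi
    rw [← Finset.mul_sum, cval hO ha hi hj hj]
    ring
  rw [Finset.sum_congr rfl fun a ha => Finset.sum_congr rfl fun i hi =>
    Finset.sum_congr rfl fun m hm => hinner1 a ha i hi m hm]
  rw [Finset.sum_congr rfl fun a ha => Finset.sum_congr rfl fun i hi => hinner2 a ha i hi]
  simp only [← Finset.mul_sum]
  rw [← mul_add, mainA G hj, mainB G hj (fun x => ∑ m ∈ Oᶜ, adjMat G x m)]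
  -- now unfold zVec
  have hU : (∑ k : {x // x ∈ O}, uVec G O k) = ∑ i ∈ O, ∑ m ∈ O, adjMat G i m := by
    rw [Finset.sum_congr rfl fun k _ => uVec_eq G O k]
    exact Finset.sum_coe_sort O (fun i => ∑ m ∈ O, adjMat G i m)
  have hW : (∑ k : {x // x ∈ O}, vVec G O k) = ∑ i ∈ O, ∑ m ∈ Oᶜ, adjMat G i m :=
    Finset.sum_coe_sort O (fun i => ∑ m ∈ Oᶜ, adjMat G i m)
  have hAv : (AOO G O).mulVec (vVec G O) j
      = ∑ i ∈ O, adjMat G (j:V) i * ∑ m ∈ Oᶜ, adjMat G i m := by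
    simp only [Matrix.mulVec, dotProduct]
    exact Finset.sum_coe_sort O (fun i => adjMat G (j:V) i * ∑ m ∈ Oᶜ, adjMat G i m)
  have hvj : vVec G O j = ∑ m ∈ Oᶜ, adjMat G (j:V) m := rfl
  unfold zVec
  rw [hU, hW, hAv, hvj, uVec_eq]
  ring

lemma normal_eq {n m : Type*} [Fintype n] [Fintype m] [DecidableEq m]
    (Q : Matrix n m ℝ) (r : n → ℝ) (b : m → ℝ)
    (hmin : ∀ b' : m → ℝ,
      ∑ I : n, (Q.mulVec b I - r I) ^ 2 ≤ ∑ I : n, (Q.mulVec b' I - r I) ^ 2) :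
    (Qᵀ * Q).mulVec b = Qᵀ.mulVec r := by
  funext j0
  set M := ∑ I : n, (Q I j0) ^ 2 with hM
  set c := ∑ I : n, Q I j0 * (Q.mulVec b I - r I) with hc
  have key : ∀ t : ℝ, 0 ≤ 2 * t * c + t ^ 2 * M := by
    intro t
    set b' : m → ℝ := fun k => b k + t * (if k = j0 then 1 else 0) with hb'
    have hQ : ∀ I, Q.mulVec b' I = Q.mulVec b I + t * Q I j0 := by
      intro I
      simp only [Matrix.mulVec, dotProduct, hb']
      rw [Finset.sum_congr rfl (fun k (_ : k ∈ Finset.univ) => show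
          Q I k * (b k + t * if k = j0 then (1:ℝ) else 0)
          = Q I k * b k + (if k = j0 then t * Q I k else 0) from by
        split_ifs <;> ring)]
      rw [Finset.sum_add_distrib, Finset.sum_ite_eq' Finset.univ j0
        (fun k => t * Q I k), if_pos (Finset.mem_univ j0)]
    have h := hmin b'
    have hexp : (∑ I : n, (Q.mulVec b' I - r I) ^ 2)
        = (∑ I : n, (Q.mulVec b I - r I) ^ 2) + (2 * t * c + t ^ 2 * M) := by
      rw [Finset.sum_congr rfl (fun I (_ : I ∈ Finset.univ) => show
          (Q.mulVec b' I - r I) ^ 2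
          = (Q.mulVec b I - r I) ^ 2 + ((2 * t) * (Q I j0 * (Q.mulVec b I - r I))
              + t ^ 2 * (Q I j0) ^ 2) from by rw [hQ I]; ring)]
      rw [Finset.sum_add_distrib, Finset.sum_add_distrib, ← Finset.mul_sum, ← Finset.mul_sum,
        ← hc, ← hM]
    rw [hexp] at h
    linarith
  have hM0 : 0 ≤ M := Finset.sum_nonneg fun I _ => sq_nonneg _
  have hM1 : (0:ℝ) < M + 1 := by linarith
  have hc0 : c = 0 := by
    have h1 := key (-(c / (M + 1)))
    have hne : M + 1 ≠ 0 := ne_of_gt hM1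
    have heq : 2 * -(c / (M + 1)) * c + (-(c / (M + 1))) ^ 2 * M
        = (-2 * c ^ 2 * (M + 1) + c ^ 2 * M) / (M + 1) ^ 2 := by
      field_simp
    rw [heq] at h1
    have h3 : 0 ≤ -2 * c ^ 2 * (M + 1) + c ^ 2 * M := by
      have := mul_nonneg h1 (le_of_lt (pow_pos hM1 2))
      rwa [div_mul_cancel₀ _ (pow_ne_zero 2 hne)] at this
    nlinarith [sq_nonneg c]
  -- conclude
  have hdiff : (Qᵀ * Q).mulVec b j0 - Qᵀ.mulVec r j0 = c := by
    rw [← Matrix.mulVec_mulVec]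
    simp only [Matrix.mulVec, dotProduct, Matrix.transpose_apply, hc]
    rw [← Finset.sum_sub_distrib]
    exact Finset.sum_congr rfl fun I _ => by ring
  have := hdiff
  rw [hc0] at this
  linarith

/-- `QᵀQ = 2^{|O|−4} S` and `Qᵀr = 2^{|O|−4} z`; consequently every least-squares minimizer
`b` of `‖Qb − r‖₂²` satisfies `S b = z`. -/
theorem mean_field_linear_system (hO : 4 ≤ O.card) :
    (Qmat G O)ᵀ * Qmat G O = ((2 : ℝ) ^ ((O.card : ℤ) - 4)) • Smat G O ∧
    (Qmat G O)ᵀ.mulVec (rVec G O) = ((2 : ℝ) ^ ((O.card : ℤ) - 4)) • zVec G O ∧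
    ∀ b : O → ℝ,
      (∀ b' : O → ℝ,
          ∑ I : {I : Finset V // I ⊂ O}, ((Qmat G O).mulVec b I - rVec G O I) ^ 2 ≤
            ∑ I : {I : Finset V // I ⊂ O}, ((Qmat G O).mulVec b' I - rVec G O I) ^ 2) →
        (Smat G O).mulVec b = zVec G O := by
  have h1 : (Qmat G O)ᵀ * Qmat G O = ((2 : ℝ) ^ ((O.card : ℤ) - 4)) • Smat G O := by
    ext j k
    rw [Matrix.smul_apply, QtQ_entry G O hO j k, smul_eq_mul]
  have h2 : (Qmat G O)ᵀ.mulVec (rVec G O) = ((2 : ℝ) ^ ((O.card : ℤ) - 4)) • zVec G O := by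
    funext j
    rw [Pi.smul_apply, Qtr_entry G O hO j, smul_eq_mul]
  refine ⟨h1, h2, ?_⟩
  intro b hmin
  have hnormal := normal_eq (Qmat G O) (rVec G O) b hmin
  rw [h1, h2] at hnormal
  rw [Matrix.smul_mulVec] at hnormal
  have hp : ((2 : ℝ) ^ ((O.card : ℤ) - 4)) ≠ 0 := zpow_ne_zero _ (by norm_num)
  funext x
  have := congrFun hnormal x
  simp only [Pi.smul_apply, smul_eq_mul] at this
  exact mul_left_cancel₀ hp this
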